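/- The maximal number of isolated real zeros of a nonnegative real polynomial of degree 2k in l variables which is a sum of squares of real polynomials of degree at most k is at least k^l: explicitly, the polynomial Σ_{j=1}^{l} (∏_{m=1}^{k} (x_j − m))² is a sum of squares of polynomials of degree k, is nonnegative, and has exactly k^l real zeros, all isolated. -/

import Mathlib

open MvPolynomial

lemma aux_deg {l : ℕ} (j : Fin l) (s : Finset ℕ) :
    ((∏ m ∈ s, (X j - C (m : ℝ)) : MvPolynomial (Fin l) ℝ)).totalDegree = s.card ∧
    MvPolynomial.coeff (Finsupp.single j s.card) (∏ m ∈ s, (X j - C (m : ℝ))) = 1 := by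
  induction s using Finset.cons_induction with
  | empty => simp
  | cons a s ha ih =>
    obtain ⟨hd, hc⟩ := ih
    rw [Finset.prod_cons, Finset.card_cons]
    have hsum : ∀ n : ℕ, ((Finsupp.single j n).sum fun _ e => e) = n := fun n =>
      Finsupp.sum_single_index rfl
    have hfac : ((X j - C (a : ℝ)) : MvPolynomial (Fin l) ℝ).totalDegree ≤ 1 :=
      (totalDegree_sub_C_le _ _).trans_eq (totalDegree_X j)
    have hcoeff : MvPolynomial.coeff (Finsupp.single j (s.card + 1))
        ((X j - C (a : ℝ)) * ∏ m ∈ s, (X j - C (m : ℝ))) = 1 := by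
      rw [sub_mul, coeff_sub, coeff_C_mul]
      have h0 : MvPolynomial.coeff (Finsupp.single j (s.card + 1))
          (∏ m ∈ s, (X j - C (m : ℝ)) : MvPolynomial (Fin l) ℝ) = 0 := by
        apply coeff_eq_zero_of_totalDegree_lt
        rw [hd]
        rw [show (∑ i ∈ (Finsupp.single j (s.card + 1)).support,
          Finsupp.single j (s.card + 1) i) = (Finsupp.single j (s.card+1)).sum fun _ e => e from rfl,
          hsum]
        omega
      have h1 : Finsupp.single j (s.card + 1) = Finsupp.single j 1 + Finsupp.single j s.card := by
        rw [← Finsupp.single_add]; ring_nf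
      rw [h0, mul_zero, sub_zero, h1, coeff_X_mul, hc]
    constructor
    · refine le_antisymm ?_ ?_
      · calc ((X j - C (a:ℝ)) * ∏ m ∈ s, (X j - C (m : ℝ))).totalDegree
            ≤ (X j - C (a:ℝ)).totalDegree + (∏ m ∈ s, (X j - C (m : ℝ)) : MvPolynomial (Fin l) ℝ).totalDegree := totalDegree_mul _ _
          _ ≤ 1 + s.card := add_le_add hfac hd.le
          _ = s.card + 1 := by ring
      · have hm : Finsupp.single j (s.card + 1) ∈
            ((X j - C (a : ℝ)) * ∏ m ∈ s, (X j - C (m : ℝ))).support :=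
          mem_support_iff.mpr (by rw [hcoeff]; norm_num)
        have := le_totalDegree hm
        rwa [hsum] at this
    · exact hcoeff


/-- The polynomial `F = ∑_j (∏_{m=1}^k (x_j - m))²` in `l` variables is a sum of squares
of polynomials of degree `k`, is nonnegative, and its real zero set is the grid
`{1,…,k}^l`, consisting of exactly `k^l` isolated points. Hence `♯̃(2k,l) ≥ k^l`. -/
theorem sos_with_kl_isolated_zeros (l k : ℕ) (hl : 1 ≤ l) (hk : 1 ≤ k)
    (F : MvPolynomial (Fin l) ℝ)
    (hF : F = ∑ j : Fin l, (∏ m ∈ Finset.Icc 1 k, (X j - C (m : ℝ)))^2) :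
    (∃ g : Fin l → MvPolynomial (Fin l) ℝ,
        (∀ j, (g j).totalDegree = k) ∧ F = ∑ j : Fin l, (g j)^2) ∧
    (∀ x : Fin l → ℝ, 0 ≤ MvPolynomial.eval x F) ∧
    {x : Fin l → ℝ | MvPolynomial.eval x F = 0}
      = {x : Fin l → ℝ | ∀ j, ∃ m : ℕ, 1 ≤ m ∧ m ≤ k ∧ x j = (m : ℝ)} ∧
    {x : Fin l → ℝ | MvPolynomial.eval x F = 0}.Finite ∧
    {x : Fin l → ℝ | MvPolynomial.eval x F = 0}.ncard = k ^ l ∧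
    (∀ x₀ : Fin l → ℝ, MvPolynomial.eval x₀ F = 0 →
      nhdsWithin x₀ ({x : Fin l → ℝ | MvPolynomial.eval x F = 0} \ {x₀}) = ⊥) := by
  classical
  -- evaluation formula
  have heval : ∀ x : Fin l → ℝ,
      MvPolynomial.eval x F = ∑ j : Fin l, (∏ m ∈ Finset.Icc 1 k, (x j - (m : ℝ)))^2 := by
    intro x
    simp [hF]
  -- nonnegativity
  have hnn : ∀ x : Fin l → ℝ, 0 ≤ MvPolynomial.eval x F := by
    intro x
    rw [heval]
    exact Finset.sum_nonneg fun j _ => sq_nonneg _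
  -- characterization of zeros
  have hzero : ∀ x : Fin l → ℝ, MvPolynomial.eval x F = 0 ↔
      ∀ j : Fin l, ∃ m : ℕ, 1 ≤ m ∧ m ≤ k ∧ x j = (m : ℝ) := by
    intro x
    rw [heval, Finset.sum_eq_zero_iff_of_nonneg fun j _ => sq_nonneg _]
    constructor
    · intro h j
      have := h j (Finset.mem_univ j)
      rw [sq_eq_zero_iff, Finset.prod_eq_zero_iff] at this
      obtain ⟨m, hm, hm0⟩ := this
      rw [Finset.mem_Icc] at hm
      exact ⟨m, hm.1, hm.2, by linarith [sub_eq_zero.mp hm0]⟩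
    · intro h j _
      obtain ⟨m, h1, h2, h3⟩ := h j
      rw [sq_eq_zero_iff, Finset.prod_eq_zero_iff]
      exact ⟨m, Finset.mem_Icc.mpr ⟨h1, h2⟩, by rw [h3, sub_self]⟩
  have hset : {x : Fin l → ℝ | MvPolynomial.eval x F = 0}
      = {x : Fin l → ℝ | ∀ j, ∃ m : ℕ, 1 ≤ m ∧ m ≤ k ∧ x j = (m : ℝ)} := by
    ext x; exact hzero x
  -- the zero set as a finite pi-set
  set T : Finset ℝ := (Finset.Icc 1 k).image (fun m : ℕ => (m : ℝ)) with hT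
  have hTcard : T.card = k := by
    rw [hT, Finset.card_image_of_injective _ Nat.cast_injective, Nat.card_Icc]
    omega
  have hZfin : {x : Fin l → ℝ | MvPolynomial.eval x F = 0}
      = ↑(Fintype.piFinset fun _ : Fin l => T) := by
    rw [hset]
    ext x
    simp only [Set.mem_setOf_eq, Finset.mem_coe, Fintype.mem_piFinset]
    constructor
    · intro h j
      obtain ⟨m, h1, h2, h3⟩ := h j
      exact Finset.mem_image.mpr ⟨m, Finset.mem_Icc.mpr ⟨h1, h2⟩, h3.symm⟩
    · intro h j
      obtain ⟨m, hm, hme⟩ := Finset.mem_image.mp (h j)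
      rw [Finset.mem_Icc] at hm
      exact ⟨m, hm.1, hm.2, hme.symm⟩
  have hfin : {x : Fin l → ℝ | MvPolynomial.eval x F = 0}.Finite := by
    rw [hZfin]; exact (Fintype.piFinset fun _ : Fin l => T).finite_toSet
  refine ⟨?_, hnn, hset, hfin, ?_, ?_⟩
  · -- sum of squares with degrees
    refine ⟨fun j => ∏ m ∈ Finset.Icc 1 k, (X j - C (m : ℝ)), fun j => ?_, hF⟩
    have := (aux_deg j (Finset.Icc 1 k)).1
    rwa [Nat.card_Icc, Nat.add_sub_cancel] at this
  · -- cardinality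
    rw [hZfin, Set.ncard_coe_finset, Fintype.card_piFinset]
    simp [hTcard]
  · -- isolated zeros
    intro x₀ hx₀
    have hfin' : ({x : Fin l → ℝ | MvPolynomial.eval x F = 0} \ {x₀}).Finite :=
      hfin.diff
    have hclosed := hfin'.isClosed
    rw [← Filter.not_neBot, ← mem_closure_iff_nhdsWithin_neBot, hclosed.closure_eq]
    simp
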